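/- For m ∈ ℝ \ {0,1} and positive reals λ ≠ μ, the power difference mean θ_m(λ,μ) = ((m−1)/m) · (λ^m − μ^m)/(λ^{m−1} − μ^{m−1}) admits the integral representation θ_m(λ,μ) = ∫₀¹ ((1−α) λ^{m−1} + α μ^{m−1})^{1/(m−1)} dα. -/

import Mathlib

/-- Integral representation of the power difference mean:
for `m ∉ {0,1}` and positive `λ ≠ μ`,
`θ_m(λ,μ) = ((m−1)/m)·(λ^m − μ^m)/(λ^{m−1} − μ^{m−1})
          = ∫₀¹ ((1−α) λ^{m−1} + α μ^{m−1})^{1/(m−1)} dα`. -/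
theorem stmt_9 (m lam mu : ℝ) (hm0 : m ≠ 0) (hm1 : m ≠ 1)
    (hlam : 0 < lam) (hmu : 0 < mu) (hne : lam ≠ mu) :
    ((m - 1) / m) * ((lam ^ m - mu ^ m) / (lam ^ (m - 1) - mu ^ (m - 1)))
      = ∫ α in (0:ℝ)..1, ((1 - α) * lam ^ (m - 1) + α * mu ^ (m - 1)) ^ (1 / (m - 1)) := by
  have hm1' : m - 1 ≠ 0 := sub_ne_zero.mpr hm1
  set a := lam ^ (m - 1) with ha
  set b := mu ^ (m - 1) with hb
  set p := 1 / (m - 1) with hp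
  have hapos : 0 < a := Real.rpow_pos_of_pos hlam _
  have hbpos : 0 < b := Real.rpow_pos_of_pos hmu _
  have hab : a ≠ b := by
    intro h
    apply hne
    have := congrArg (fun x : ℝ => x ^ p) h
    simp only [ha, hb, hp] at this
    rwa [← Real.rpow_mul hlam.le, ← Real.rpow_mul hmu.le,
      mul_one_div, div_self hm1', Real.rpow_one, Real.rpow_one] at this
  have hc : b - a ≠ 0 := sub_ne_zero.mpr (Ne.symm hab)
  have hp1 : p + 1 = m / (m - 1) := by field_simp [hp]; rw [hp, add_mul, div_mul_cancel₀ 1 hm1']; ring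
  have hp1ne : p + 1 ≠ 0 := by rw [hp1]; exact div_ne_zero hm0 hm1'
  -- positivity of the base on [0,1]
  have hpos : ∀ t ∈ Set.uIcc (0:ℝ) 1, 0 < (1 - t) * a + t * b := by
    intro t ht
    rw [Set.uIcc_of_le zero_le_one] at ht
    have h0 : 0 ≤ t := ht.1
    have h1 : t ≤ 1 := ht.2
    rcases eq_or_lt_of_le h1 with h | h
    · rw [h]; simpa using hbpos
    · have : 0 < (1 - t) * a := mul_pos (by linarith) hapos
      nlinarith [mul_nonneg h0 hbpos.le]
  -- the antiderivative
  set F : ℝ → ℝ := fun t => ((1 - t) * a + t * b) ^ (p + 1) / ((p + 1) * (b - a)) with hF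
  have hderiv : ∀ t ∈ Set.uIcc (0:ℝ) 1,
      HasDerivAt F (((1 - t) * a + t * b) ^ p) t := by
    intro t ht
    have hbase : HasDerivAt (fun t : ℝ => (1 - t) * a + t * b) (b - a) t := by
      have : HasDerivAt (fun t : ℝ => (1 - t) * a + t * b) (-1 * a + 1 * b) t := by
        exact (((hasDerivAt_id t).const_sub 1).mul_const a).add ((hasDerivAt_id t).mul_const b)
      simpa [neg_mul, neg_add_eq_sub] using this
    have hx := hpos t ht
    have hr : HasDerivAt (fun x : ℝ => x ^ (p + 1))
        ((p + 1) * ((1 - t) * a + t * b) ^ (p + 1 - 1)) ((1 - t) * a + t * b) :=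
      Real.hasDerivAt_rpow_const (Or.inl hx.ne')
    have := (hr.comp t hbase).div_const ((p + 1) * (b - a))
    have heq : (p + 1) * ((1 - t) * a + t * b) ^ (p + 1 - 1) * (b - a) / ((p + 1) * (b - a))
        = ((1 - t) * a + t * b) ^ p := by
      rw [add_sub_cancel_right]
      field_simp
    rw [heq] at this
    exact this
  have hcont : IntervalIntegrable (fun t : ℝ => ((1 - t) * a + t * b) ^ p)
      MeasureTheory.volume 0 1 := by
    apply ContinuousOn.intervalIntegrable
    apply ContinuousOn.rpow_const
    · fun_prop
    · intro t ht
      exact Or.inl (hpos t ht).ne'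
  have hint := intervalIntegral.integral_eq_sub_of_hasDerivAt hderiv hcont
  rw [hint]
  have e1 : a ^ (p + 1) = lam ^ m := by
    rw [ha, hp1, ← Real.rpow_mul hlam.le]
    congr 1
    field_simp
  have e2 : b ^ (p + 1) = mu ^ m := by
    rw [hb, hp1, ← Real.rpow_mul hmu.le]
    congr 1
    field_simp
  have : F 1 - F 0 = (mu ^ m - lam ^ m) / ((p + 1) * (b - a)) := by
    simp only [hF]
    rw [show (1:ℝ) - 1 = 0 by ring, show (1:ℝ) - 0 = 1 by ring]
    rw [zero_mul, one_mul, zero_add, zero_mul, one_mul, add_zero, e1, e2]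
    ring
  rw [this, hp1]
  have hab' : a - b ≠ 0 := sub_ne_zero.mpr hab
  field_simp
  ring
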